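/- Let k be a finite field of characteristic 2 and let η = ∑_{j ≤ N} η_j t^j be a Laurent series over k in t^{-1}. If η = y^2 + y for some Laurent series y ∈ k((t^{-1})), then for every odd positive integer j_0 one has ∑_{m=0}^{∞} (η_{2^m j_0})^{2^{-m}} = 0, where c^{2^{-m}} denotes the unique 2^m-th root of c in k and the sum is finite since η_j = 0 for j > N. -/

import Mathlib

open Finset

section aux

variable {k : Type*} [Field k]

private lemma sq_coeff_odd [CharP k 2] (y : LaurentSeries k) (n : ℤ) (h : ¬ Even n) :
    (y * y).coeff n = 0 := by
  rw [HahnSeries.coeff_mul]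
  apply Finset.sum_involution (fun a _ => a.swap)
  · intro a _
    simp only [Prod.fst_swap, Prod.snd_swap]
    rw [mul_comm]
    exact CharTwo.add_self_eq_zero _
  · intro a ha _ hswap
    rw [Finset.mem_addAntidiagonal] at ha
    apply h
    have h1 : a.2 = a.1 := congrArg Prod.fst hswap
    exact ⟨a.1, by rw [← ha.2.2, h1]⟩
  · intro a _
    exact Prod.swap_swap a
  · intro a ha
    rw [Finset.mem_addAntidiagonal] at ha ⊢
    exact ⟨ha.2.1, ha.1, by rw [add_comm]; exact ha.2.2⟩

private lemma sq_coeff_even [CharP k 2] (y : LaurentSeries k) (n : ℤ) :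
    (y * y).coeff (2 * n) = (y.coeff n) ^ 2 := by
  classical
  rw [HahnSeries.coeff_mul]
  have hoff : ∀ s : Finset (ℤ × ℤ), ((n, n) ∉ s) →
      (∀ a ∈ s, a.1 ∈ y.support ∧ a.2 ∈ y.support ∧ a.1 + a.2 = 2 * n) →
      (∀ a ∈ s, a.swap ∈ s) →
      ∑ a ∈ s, y.coeff a.1 * y.coeff a.2 = 0 := by
    intro s hns hmem hsw
    apply Finset.sum_involution (fun a _ => a.swap)
    · intro a _
      simp only [Prod.fst_swap, Prod.snd_swap]
      rw [mul_comm]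
      exact CharTwo.add_self_eq_zero _
    · intro a ha _ hswap
      have h1 : a.2 = a.1 := congrArg Prod.fst hswap
      have h2 := (hmem a ha).2.2
      have h3 : a.1 = n := by omega
      have h4 : a = (n, n) := by
        rw [← Prod.mk.eta (p := a), h1, h3]
      exact hns (h4 ▸ ha)
    · intro a _
      exact Prod.swap_swap a
    · exact hsw
  by_cases hn : y.coeff n = 0
  · rw [hn, zero_pow (two_ne_zero)]
    apply hoff
    · rw [Finset.mem_addAntidiagonal]
      intro hc
      exact hc.1 hn
    · intro a ha
      rw [Finset.mem_addAntidiagonal] at ha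
      exact ha
    · intro a ha
      rw [Finset.mem_addAntidiagonal] at ha ⊢
      exact ⟨ha.2.1, ha.1, by rw [add_comm]; exact ha.2.2⟩
  · have hmem : ((n, n) : ℤ × ℤ) ∈
        Finset.antidiagonal y.isPWO_support y.isPWO_support (2 * n) := by
      rw [Finset.mem_addAntidiagonal]
      exact ⟨hn, hn, (two_mul n).symm⟩
    rw [← Finset.add_sum_erase _ _ hmem]
    have : ∑ a ∈ (Finset.antidiagonal y.isPWO_support y.isPWO_support (2 * n)).erase (n, n),
        y.coeff a.1 * y.coeff a.2 = 0 := by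
      apply hoff
      · exact Finset.notMem_erase _ _
      · intro a ha
        have := Finset.mem_of_mem_erase ha
        rw [Finset.mem_addAntidiagonal] at this
        exact this
      · intro a ha
        rw [Finset.mem_erase, Finset.mem_addAntidiagonal] at ha ⊢
        refine ⟨?_, ha.2.2.1, ha.2.1, by rw [add_comm]; exact ha.2.2.2⟩
        intro hc
        have h1 : a.2 = n := congrArg Prod.fst hc
        have h2 : a.1 = n := congrArg Prod.snd hc
        exact ha.1 (by rw [← Prod.mk.eta (p := a), h1, h2])
    rw [this, add_zero, sq]

private lemma ycoeff_zero [CharP k 2] (N : ℕ) (η y : LaurentSeries k)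
    (hN : ∀ j : ℤ, (N : ℤ) < j → η.coeff (-j) = 0) (hy : η = y ^ 2 + y) :
    ∀ n : ℤ, 2 * n < -(N : ℤ) → y.coeff n = 0 := by
  by_contra h
  push_neg at h
  obtain ⟨n, hn, hne⟩ := h
  set T : Set ℤ := {m | y.coeff m ≠ 0 ∧ 2 * m < -(N : ℤ)} with hT
  have hTwf : T.IsWF := y.isWF_support.mono (fun x hx => hx.1)
  have hTne : T.Nonempty := ⟨n, hne, hn⟩
  set n0 := hTwf.min hTne with hn0def
  have hn0 : n0 ∈ T := hTwf.min_mem hTne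
  have hNnn : (0:ℤ) ≤ (N:ℤ) := Int.natCast_nonneg N
  have hn0neg : n0 < 0 := by
    have := hn0.2; omega
  have h2n0 : y.coeff (2 * n0) = 0 := by
    by_contra h2
    have hmem : 2 * n0 ∈ T := ⟨h2, by have := hn0.2; omega⟩
    exact hTwf.not_lt_min hTne hmem (by omega)
  have hcoeff : η.coeff (2 * n0) = (y.coeff n0) ^ 2 := by
    rw [hy, HahnSeries.coeff_add, sq, sq_coeff_even, h2n0, add_zero]
  have hzero : η.coeff (2 * n0) = 0 := by
    have := hN (-(2 * n0)) (by have := hn0.2; omega)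
    rwa [neg_neg] at this
  rw [hcoeff] at hzero
  exact hn0.1 (pow_eq_zero_iff (by norm_num) |>.mp hzero)

end aux

/-- If `η = y² + y` in `k((t⁻¹))` with `η_j = 0` for `j > N`, then for every odd
positive `j₀` the (finite) sum `∑ₘ (η_{2^m j₀})^{2^{-m}}` vanishes; the sum over
`m ∈ range (N+1)` includes all possibly nonzero terms since `η_{2^m j₀} = 0`
for `2^m j₀ > N`. -/
theorem stmt_8 (k : Type*) [Field k] [Fintype k] [ExpChar k 2] [PerfectRing k 2]
    (N : ℕ) (η y : LaurentSeries k)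
    (hN : ∀ j : ℤ, (N : ℤ) < j → η.coeff (-j) = 0)
    (hy : η = y ^ 2 + y)
    (j0 : ℤ) (hodd : Odd j0) (hpos : 0 < j0) :
    ∑ m ∈ Finset.range (N + 1),
      ((frobeniusEquiv k 2).symm)^[m] (η.coeff (-(2 ^ m * j0))) = 0 := by
  haveI : CharP k 2 := by
    obtain _ | _ := ‹ExpChar k 2›
    assumption
  set φ : k → k := ⇑(frobeniusEquiv k 2).symm with hφ
  have hφadd : ∀ (m : ℕ) (u v : k), φ^[m] (u + v) = φ^[m] u + φ^[m] v := by
    intro m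
    induction m with
    | zero => intro u v; simp
    | succ m ih =>
      intro u v
      rw [Function.iterate_succ_apply, Function.iterate_succ_apply,
        Function.iterate_succ_apply,
        show φ (u + v) = φ u + φ v from map_add (frobeniusEquiv k 2).symm u v, ih]
  have hφsq : ∀ (m : ℕ) (u : k), φ^[m + 1] (u ^ 2) = φ^[m] u := by
    intro m u
    rw [Function.iterate_succ_apply]
    congr 1
    have : u ^ 2 = frobenius k 2 u := by rw [frobenius_def]
    rw [this, hφ]
    exact frobeniusEquiv_symm_apply_frobenius k 2 u
  have key : ∀ M : ℕ, ∑ m ∈ Finset.range (M + 1), φ^[m] (η.coeff (-(2 ^ m * j0)))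
      = φ^[M] (y.coeff (-(2 ^ M * j0))) := by
    intro M
    induction M with
    | zero =>
      simp only [zero_add, Finset.sum_range_one, Function.iterate_zero, id_eq, pow_zero,
        one_mul]
      rw [hy, HahnSeries.coeff_add, sq, sq_coeff_odd, zero_add]
      intro he
      exact (Int.not_odd_iff_even.mpr (even_neg.mp he)) hodd
    | succ M ih =>
      rw [Finset.sum_range_succ, ih]
      have harg : -(2 ^ (M + 1) * j0) = 2 * (-(2 ^ M * j0)) := by ring
      have hcoeff : η.coeff (-(2 ^ (M + 1) * j0))
          = (y.coeff (-(2 ^ M * j0))) ^ 2 + y.coeff (-(2 ^ (M + 1) * j0)) := by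
        rw [hy, HahnSeries.coeff_add, harg, sq, sq_coeff_even]
      rw [hcoeff, hφadd, hφsq]
      rw [← add_assoc, CharTwo.add_self_eq_zero, zero_add]
  rw [key N]
  have hy0 : y.coeff (-(2 ^ N * j0)) = 0 := by
    apply ycoeff_zero N η y hN hy
    have h1 : (N : ℤ) < 2 ^ (N + 1) := by
      have := Nat.lt_two_pow_self (n := N)
      calc (N : ℤ) < 2 ^ N := by exact_mod_cast this
        _ ≤ 2 ^ (N + 1) := by
          apply pow_le_pow_right₀ (by norm_num) (Nat.le_succ N)
    have h2 : (2:ℤ) ^ (N + 1) ≤ 2 ^ (N + 1) * j0 :=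
      le_mul_of_one_le_right (by positivity) hpos
    have h3 : (2:ℤ) * (2 ^ N * j0) = 2 ^ (N + 1) * j0 := by ring
    linarith
  rw [hy0]
  exact Function.iterate_fixed (map_zero _) N
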